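/- arXiv:2507.12272 — 7 statements merged into one kernel-verified Lean document; each statement's English description precedes it below -/
import Mathlib

section
/- If F : X → 2^X is upper semicontinuous on a compact metric space X, then the union ⋃_{x ∈ X} O_F(x) of all orbit sets is a compact subset of X^ℕ. -/
open Set Topology Filter

variable {X : Type*}

/-- Iterates of a set-valued map: `IterF F 0 x = {x}`,
`IterF F (n+1) x = ⋃ y ∈ IterF F n x, F y`; so `IterF F k` is `F^k` for `k ≥ 1`. -/
def IterF (F : X → Set X) : ℕ → X → Set X
  | 0 => fun x => {x}
  | n + 1 => fun x => ⋃ y ∈ IterF F n x, F y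

/-- The orbit set of `z` under `F` (sequences indexed from `0`). -/
def OrbitSet (F : X → Set X) (z : X) : Set (ℕ → X) :=
  {u | u 0 = z ∧ ∀ n, u (n + 1) ∈ F (u n)}

/-- Upper semicontinuity of a set-valued function. -/
def USC [TopologicalSpace X] (F : X → Set X) : Prop :=
  ∀ x, ∀ V : Set X, IsOpen V → F x ⊆ V →
    ∃ U : Set X, IsOpen U ∧ x ∈ U ∧ ∀ y ∈ U, F y ⊆ V

/-- Lower semicontinuity of a set-valued function. -/
def LSC [TopologicalSpace X] (F : X → Set X) : Prop :=
  ∀ x, ∀ V : Set X, IsOpen V → (F x ∩ V).Nonempty →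
    ∃ U : Set X, IsOpen U ∧ x ∈ U ∧ ∀ y ∈ U, (F y ∩ V).Nonempty

/-- The union of all orbit sets of an upper semicontinuous map is compact in `X^ℕ`. -/
theorem stmt7 [MetricSpace X] [CompactSpace X] (F : X → Set X)
    (hne : ∀ x, (F x).Nonempty) (hcl : ∀ x, IsClosed (F x)) (hF : USC F) :
    IsCompact (⋃ x : X, OrbitSet F x) := by
  have hset : (⋃ x : X, OrbitSet F x) = {u : ℕ → X | ∀ n, u (n + 1) ∈ F (u n)} := by
    ext u
    simp only [mem_iUnion, OrbitSet, mem_setOf_eq]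
    exact ⟨fun ⟨x, _, h⟩ => h, fun h => ⟨u 0, rfl, h⟩⟩
  rw [hset]
  have hclosed : IsClosed {u : ℕ → X | ∀ n, u (n + 1) ∈ F (u n)} := by
    rw [← isOpen_compl_iff, isOpen_iff_mem_nhds]
    intro u hu
    simp only [mem_compl_iff, mem_setOf_eq, not_forall] at hu
    obtain ⟨n, hn⟩ := hu
    set x := u n with hx
    set y := u (n + 1) with hy
    have hε : 0 < Metric.infDist y (F x) :=
      ((hcl x).notMem_iff_infDist_pos (hne x)).mp hn
    set ε := Metric.infDist y (F x) with hεdef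
    have hVopen : IsOpen (Metric.thickening (ε / 2) (F x)) := Metric.isOpen_thickening
    have hFV : F x ⊆ Metric.thickening (ε / 2) (F x) :=
      Metric.self_subset_thickening (by linarith) _
    obtain ⟨U, hUopen, hxU, hU⟩ := hF x _ hVopen hFV
    have hdisj : ∀ w ∈ Metric.ball y (ε / 2), w ∉ Metric.thickening (ε / 2) (F x) := by
      intro w hw hwV
      rw [Metric.mem_thickening_iff] at hwV
      obtain ⟨p, hp, hwp⟩ := hwV
      have : ε ≤ dist y p := Metric.infDist_le_dist_of_mem hp
      have : dist y p ≤ dist y w + dist w p := dist_triangle _ _ _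
      rw [Metric.mem_ball] at hw
      rw [dist_comm] at hw
      linarith
    have hT : IsOpen ((fun v : ℕ → X => v n) ⁻¹' U ∩
        (fun v : ℕ → X => v (n + 1)) ⁻¹' Metric.ball y (ε / 2)) :=
      (hUopen.preimage (continuous_apply n)).inter
        (Metric.isOpen_ball.preimage (continuous_apply (n + 1)))
    refine Filter.mem_of_superset (hT.mem_nhds ⟨hxU, Metric.mem_ball_self (by linarith)⟩) ?_
    rintro v ⟨hv1, hv2⟩
    simp only [mem_compl_iff, mem_setOf_eq, not_forall]
    exact ⟨n, fun h => hdisj _ hv2 (hU _ hv1 h)⟩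
  exact hclosed.isCompact
end

section
/- Let X be a continuum and F : X → 2^X upper semicontinuous with F(x) connected for every x ∈ X. Then for each x ∈ X and each n ∈ ℕ, the set O_F(x)|_{[n]} = {(y_i) ∈ X^ℕ : y_1 = x and y_{i+1} ∈ F(y_i) for each i ≤ n−1} is compact and connected. -/
open Set Topology Filter

variable {X : Type*}

/-- The graph of a USC map with closed nonempty values is closed. -/
lemma usc_graph_closed [MetricSpace X] (F : X → Set X) (hne : ∀ x, (F x).Nonempty)
    (hcl : ∀ x, IsClosed (F x)) (hF : USC F) :
    IsClosed {p : X × X | p.2 ∈ F p.1} := by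
  rw [← isOpen_compl_iff, isOpen_iff_forall_mem_open]
  rintro ⟨a, b⟩ hab
  simp only [mem_compl_iff, mem_setOf_eq] at hab
  have hd : 0 < Metric.infDist b (F a) :=
    ((hcl a).notMem_iff_infDist_pos (hne a)).mp hab
  set d := Metric.infDist b (F a) with hdd
  obtain ⟨U, hUo, haU, hU⟩ := hF a (Metric.thickening (d / 2) (F a))
    Metric.isOpen_thickening (Metric.self_subset_thickening (by linarith) _)
  refine ⟨U ×ˢ Metric.ball b (d / 2), ?_, hUo.prod Metric.isOpen_ball,
    ⟨haU, Metric.mem_ball_self (by linarith)⟩⟩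
  rintro ⟨a', b'⟩ ⟨ha', hb'⟩
  simp only [mem_compl_iff, mem_setOf_eq]
  intro hmem
  have h1 : Metric.infDist b' (F a) < d / 2 :=
    (Metric.mem_thickening_iff_infDist_lt (hne a)).mp (hU a' ha' hmem)
  have h2 : d ≤ Metric.infDist b' (F a) + dist b b' := Metric.infDist_le_infDist_add_dist
  have h3 : dist b b' < d / 2 := by rw [dist_comm]; exact hb'
  linarith

/-- Key connectedness lemma: the partial orbit sets are preconnected. -/
lemma orbit_preconnected [MetricSpace X] [CompactSpace X] [ConnectedSpace X]
    (F : X → Set X) (hne : ∀ x, (F x).Nonempty) (hcl : ∀ x, IsClosed (F x))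
    (hconn : ∀ x, IsConnected (F x)) (hF : USC F) (x : X) (n : ℕ) :
    IsPreconnected {u : ℕ → X | u 0 = x ∧ ∀ i < n, u (i + 1) ∈ F (u i)} := by
  induction n with
  | zero =>
    have h : {u : ℕ → X | u 0 = x ∧ ∀ i < 0, u (i + 1) ∈ F (u i)} =
        Set.range (fun u : ℕ → X => Function.update u 0 x) := by
      ext u
      simp only [mem_setOf_eq, mem_range]
      constructor
      · rintro ⟨h0, -⟩
        exact ⟨u, by rw [← h0, Function.update_eq_self]⟩
      · rintro ⟨v, rfl⟩
        exact ⟨Function.update_self _ _ _, fun i hi => absurd hi (Nat.not_lt_zero i)⟩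
    rw [h]
    exact isPreconnected_range (continuous_id.update 0 continuous_const)
  | succ n ih =>
    set S := {u : ℕ → X | u 0 = x ∧ ∀ i < n, u (i + 1) ∈ F (u i)} with hSdef
    set S' := {u : ℕ → X | u 0 = x ∧ ∀ i < n + 1, u (i + 1) ∈ F (u i)} with hS'def
    set C : (ℕ → X) → Set (ℕ → X) :=
      fun u => (fun y => Function.update u (n + 1) y) '' F (u n) with hCdef
    have hCconn : ∀ u, IsConnected (C u) := fun u =>
      (hconn (u n)).image _ ((Continuous.update (continuous_const : Continuous fun _ : X => u) (n + 1) continuous_id).continuousOn)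
    have hCsub : ∀ u ∈ S, C u ⊆ S' := by
      rintro u ⟨h0, hs⟩ v ⟨y, hy, rfl⟩
      constructor
      · show Function.update u (n + 1) y 0 = x
        rw [Function.update_of_ne (by omega)]; exact h0
      · intro i hi
        show Function.update u (n + 1) y (i + 1) ∈ F (Function.update u (n + 1) y i)
        rcases Nat.lt_succ_iff_lt_or_eq.mp hi with h | rfl
        · rw [Function.update_of_ne (by omega : i + 1 ≠ n + 1),
            Function.update_of_ne (by omega : i ≠ n + 1)]
          exact hs i h
        · rw [Function.update_self, Function.update_of_ne (by omega : i ≠ i + 1)]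
          exact hy
    have hmono : S' ⊆ S := fun u ⟨h0, hs⟩ => ⟨h0, fun i hi => hs i (Nat.lt_succ_of_lt hi)⟩
    have hself : ∀ v ∈ S', v ∈ C v := fun v hv =>
      ⟨v (n + 1), hv.2 n (Nat.lt_succ_self n), Function.update_eq_self _ _⟩
    -- tube lemma for C
    have htube : ∀ u, ∀ W : Set (ℕ → X), IsOpen W → C u ⊆ W →
        ∃ N : Set (ℕ → X), IsOpen N ∧ u ∈ N ∧ ∀ u' ∈ N, C u' ⊆ W := by
      intro u W hW hCW
      have hφ : Continuous (fun p : (ℕ → X) × X => Function.update p.1 (n + 1) p.2) :=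
        continuous_fst.update (n + 1) continuous_snd
      have hsub : ({u} : Set (ℕ → X)) ×ˢ F (u n) ⊆
          (fun p : (ℕ → X) × X => Function.update p.1 (n + 1) p.2) ⁻¹' W := by
        rintro ⟨u', y⟩ ⟨hu', hy⟩
        rcases hu' with rfl
        exact hCW ⟨y, hy, rfl⟩
      obtain ⟨U, V, hUo, hVo, hUs, hVs, hUV⟩ :=
        generalized_tube_lemma isCompact_singleton ((hcl (u n)).isCompact)
          (hW.preimage hφ) hsub
      obtain ⟨U₂, hU₂o, hmemU₂, hU₂⟩ := hF (u n) V hVo hVs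
      refine ⟨U ∩ ((fun u' : ℕ → X => u' n) ⁻¹' U₂),
        hUo.inter (hU₂o.preimage (continuous_apply n)),
        ⟨hUs rfl, hmemU₂⟩, ?_⟩
      rintro u' ⟨hu'U, hu'2⟩ v ⟨y, hy, rfl⟩
      exact hUV (⟨hu'U, hU₂ (u' n) hu'2 hy⟩ : (u', y) ∈ U ×ˢ V)
    intro U V hU hV hcover hneU hneV
    by_contra hempty
    have hdiv : ∀ u ∈ S, C u ⊆ U ∨ C u ⊆ V := by
      intro u hu
      by_cases h1 : (C u ∩ V).Nonempty
      · by_cases h2 : (C u ∩ U).Nonempty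
        · exfalso
          obtain ⟨w, hw⟩ := (hCconn u).isPreconnected U V hU hV
            (fun v hv => hcover (hCsub u hu hv)) h2 h1
          exact hempty ⟨w, hCsub u hu hw.1, hw.2⟩
        · refine Or.inr fun v hv => ?_
          rcases hcover (hCsub u hu hv) with h | h
          · exact absurd ⟨v, hv, h⟩ h2
          · exact h
      · refine Or.inl fun v hv => ?_
        rcases hcover (hCsub u hu hv) with h | h
        · exact h
        · exact absurd ⟨v, hv, h⟩ h1
    set Ustar := ⋃₀ {N : Set (ℕ → X) | IsOpen N ∧ ∀ u' ∈ N, C u' ⊆ U} with hUstar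
    set Vstar := ⋃₀ {N : Set (ℕ → X) | IsOpen N ∧ ∀ u' ∈ N, C u' ⊆ V} with hVstar
    have hUstarO : IsOpen Ustar := isOpen_sUnion fun N hN => hN.1
    have hVstarO : IsOpen Vstar := isOpen_sUnion fun N hN => hN.1
    have hUstarP : ∀ u ∈ Ustar, C u ⊆ U := by
      rintro u ⟨N, ⟨hNo, hNp⟩, huN⟩; exact hNp u huN
    have hVstarP : ∀ u ∈ Vstar, C u ⊆ V := by
      rintro u ⟨N, ⟨hNo, hNp⟩, huN⟩; exact hNp u huN
    have hUenter : ∀ u, C u ⊆ U → u ∈ Ustar := by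
      intro u hCU
      obtain ⟨N, hNo, huN, hNp⟩ := htube u U hU hCU
      exact ⟨N, ⟨hNo, hNp⟩, huN⟩
    have hVenter : ∀ u, C u ⊆ V → u ∈ Vstar := by
      intro u hCV
      obtain ⟨N, hNo, huN, hNp⟩ := htube u V hV hCV
      exact ⟨N, ⟨hNo, hNp⟩, huN⟩
    have hScover : S ⊆ Ustar ∪ Vstar := by
      intro u hu
      rcases hdiv u hu with h | h
      · exact Or.inl (hUenter u h)
      · exact Or.inr (hVenter u h)
    have hSU : (S ∩ Ustar).Nonempty := by
      obtain ⟨v, hvS', hvU⟩ := hneU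
      refine ⟨v, hmono hvS', hUenter v ?_⟩
      rcases hdiv v (hmono hvS') with h | h
      · exact h
      · exact absurd ⟨v, hvS', hvU, h (hself v hvS')⟩ hempty
    have hSV : (S ∩ Vstar).Nonempty := by
      obtain ⟨v, hvS', hvV⟩ := hneV
      refine ⟨v, hmono hvS', hVenter v ?_⟩
      rcases hdiv v (hmono hvS') with h | h
      · exact absurd ⟨v, hvS', h (hself v hvS'), hvV⟩ hempty
      · exact h
    obtain ⟨w, hwS, hwU, hwV⟩ := ih Ustar Vstar hUstarO hVstarO hScover hSU hSV
    obtain ⟨p, hp⟩ := (hconn (w n)).nonempty.image (fun y => Function.update w (n + 1) y)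
    exact hempty ⟨p, hCsub w hwS hp, hUstarP w hwU hp, hVstarP w hwV hp⟩

/-- The partial orbit sets `O_F(x)|_[n]` of an upper semicontinuous map with
connected values on a continuum are compact and connected. -/
theorem stmt8 [MetricSpace X] [CompactSpace X] [ConnectedSpace X] (F : X → Set X)
    (hne : ∀ x, (F x).Nonempty) (hcl : ∀ x, IsClosed (F x))
    (hconn : ∀ x, IsConnected (F x)) (hF : USC F) (x : X) (n : ℕ) :
    IsCompact {u : ℕ → X | u 0 = x ∧ ∀ i < n, u (i + 1) ∈ F (u i)} ∧
      IsConnected {u : ℕ → X | u 0 = x ∧ ∀ i < n, u (i + 1) ∈ F (u i)} := by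
  have hG := usc_graph_closed F hne hcl hF
  constructor
  · have hclosed : IsClosed {u : ℕ → X | u 0 = x ∧ ∀ i < n, u (i + 1) ∈ F (u i)} := by
      have h : {u : ℕ → X | u 0 = x ∧ ∀ i < n, u (i + 1) ∈ F (u i)} =
          ((fun u : ℕ → X => u 0) ⁻¹' {x}) ∩
            ⋂ i ∈ Finset.range n,
              (fun u : ℕ → X => (u i, u (i + 1))) ⁻¹' {p : X × X | p.2 ∈ F p.1} := by
        ext u
        simp [Set.mem_setOf_eq, Finset.mem_range]
      rw [h]
      exact (isClosed_singleton.preimage (continuous_apply 0)).inter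
        (isClosed_biInter fun i _ =>
          hG.preimage ((continuous_apply i).prodMk (continuous_apply (i + 1))))
    exact hclosed.isCompact
  · refine ⟨?_, orbit_preconnected F hne hcl hconn hF x n⟩
    refine ⟨fun k => Nat.rec x (fun _ p => (hne p).some) k, rfl, fun i _ => ?_⟩
    exact (hne _).some_mem
end

section
/- Let X be a continuum and F : X → 2^X an upper semicontinuous set-valued function such that F(x) is connected for every x ∈ X. Then for each x ∈ X, the orbit set O_F(x) is a continuum (compact and connected) in X^ℕ. -/
open Set Topology Filter

variable {X : Type*}

/-- The graph of an USC closed-valued map on a normal T1 space is closed. -/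
theorem usc_graph_closed_s9 {α : Type*} [TopologicalSpace α] [NormalSpace α] [T1Space α]
    {F : α → Set α} (hcl : ∀ a, IsClosed (F a)) (hF : USC F) :
    IsClosed {p : α × α | p.2 ∈ F p.1} := by
  rw [← isOpen_compl_iff, isOpen_iff_mem_nhds]
  rintro ⟨a, b⟩ hab
  simp only [Set.mem_compl_iff, Set.mem_setOf_eq] at hab
  obtain ⟨V, W, hV, hW, hFV, hbW, hVW⟩ :=
    NormalSpace.normal (F a) {b} (hcl a) isClosed_singleton
      (by simp [Set.disjoint_singleton_right, hab])
  obtain ⟨U, hU, haU, hUV⟩ := hF a V hV hFV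
  have hmem : U ×ˢ W ∈ 𝓝 (a, b) := (hU.prod hW).mem_nhds ⟨haU, hbW rfl⟩
  refine Filter.mem_of_superset hmem ?_
  rintro ⟨a', b'⟩ ⟨ha', hb'⟩
  simp only [Set.mem_compl_iff, Set.mem_setOf_eq]
  intro hmem'
  exact Set.disjoint_left.1 hVW (hUV a' ha' hmem') hb'

/-- The preimage of a preconnected set under a closed map with preconnected fibers
is preconnected. -/
theorem isPreconnected_preimage_of_isClosedMap {α β : Type*} [TopologicalSpace α]
    [TopologicalSpace β] {f : α → β} (hf : IsClosedMap f)
    {s : Set β} (hs : IsPreconnected s) (hrng : s ⊆ Set.range f)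
    (hfib : ∀ b ∈ s, IsPreconnected (f ⁻¹' {b})) : IsPreconnected (f ⁻¹' s) := by
  rw [isPreconnected_closed_iff]
  intro t t' ht ht' hsub h1 h2
  have hcov : s ⊆ f '' t ∪ f '' t' := by
    intro b hb
    obtain ⟨a, rfl⟩ := hrng hb
    rcases hsub (show a ∈ f ⁻¹' s from hb) with h | h
    · exact Or.inl ⟨a, h, rfl⟩
    · exact Or.inr ⟨a, h, rfl⟩
  obtain ⟨b, hbs, ⟨a1, ha1t, ha1⟩, a2, ha2t, ha2⟩ :=
    isPreconnected_closed_iff.1 hs (f '' t) (f '' t') (hf t ht) (hf t' ht') hcov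
      (let ⟨a, has, hat⟩ := h1; ⟨f a, has, a, hat, rfl⟩)
      (let ⟨a, has, hat⟩ := h2; ⟨f a, has, a, hat, rfl⟩)
  have hfsub : f ⁻¹' {b} ⊆ t ∪ t' := by
    intro a ha
    exact hsub (show f a ∈ s by rw [Set.mem_preimage, Set.mem_singleton_iff] at ha; rw [ha]; exact hbs)
  obtain ⟨a, hab, hat, hat'⟩ := isPreconnected_closed_iff.1 (hfib b hbs) t t' ht ht' hfsub
      ⟨a1, ha1, ha1t⟩ ⟨a2, ha2, ha2t⟩
  rw [Set.mem_preimage, Set.mem_singleton_iff] at hab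
  exact ⟨a, show f a ∈ s by rw [hab]; exact hbs, hat, hat'⟩

/-- A nested intersection of nonempty compact closed preconnected sets in a T2 space
is preconnected. -/
theorem isPreconnected_iInter_nested {α : Type*} [TopologicalSpace α] [T2Space α]
    {K : ℕ → Set α} (hdec : ∀ n, K (n + 1) ⊆ K n) (hco : ∀ n, IsCompact (K n))
    (hcl : ∀ n, IsClosed (K n)) (hne : ∀ n, (K n).Nonempty)
    (hpc : ∀ n, IsPreconnected (K n)) : IsPreconnected (⋂ n, K n) := by
  have hanti : Antitone K := antitone_nat_of_succ_le hdec
  rw [isPreconnected_closed_iff]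
  intro t t' ht ht' hsub h1 h2
  by_contra hempty
  rw [Set.not_nonempty_iff_eq_empty] at hempty
  have hKco : IsCompact (⋂ n, K n) :=
    (hco 0).of_isClosed_subset (isClosed_iInter hcl) (Set.iInter_subset K 0)
  have hA : IsCompact ((⋂ n, K n) ∩ t) := hKco.inter_right ht
  have hB : IsCompact ((⋂ n, K n) ∩ t') := hKco.inter_right ht'
  have hdisj : Disjoint ((⋂ n, K n) ∩ t) ((⋂ n, K n) ∩ t') := by
    rw [Set.disjoint_iff_inter_eq_empty]
    have heq : ((⋂ n, K n) ∩ t) ∩ ((⋂ n, K n) ∩ t') = (⋂ n, K n) ∩ (t ∩ t') := by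
      ext a; constructor
      · rintro ⟨⟨hK, hta⟩, -, ht'a⟩; exact ⟨hK, hta, ht'a⟩
      · rintro ⟨hK, hta, ht'a⟩; exact ⟨⟨hK, hta⟩, hK, ht'a⟩
    rw [heq, hempty]
  obtain ⟨U, V, hU, hV, hAU, hBV, hUV⟩ := SeparatedNhds.of_isCompact_isCompact hA hB hdisj
  have hex : ∃ n, K n \ (U ∪ V) = ∅ := by
    by_contra hcon
    push_neg at hcon
    obtain ⟨a, ha⟩ := IsCompact.nonempty_iInter_of_directed_nonempty_isCompact_isClosed
      (fun n => K n \ (U ∪ V))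
      (fun m n => ⟨max m n,
        Set.diff_subset_diff_left (hanti (le_max_left m n)),
        Set.diff_subset_diff_left (hanti (le_max_right m n))⟩)
      (fun n => hcon n)
      (fun n => (hco n).diff (hU.union hV))
      (fun n => (hcl n).sdiff (hU.union hV))
    have haK : a ∈ ⋂ n, K n := Set.mem_iInter.2 fun n => (Set.mem_iInter.1 ha n).1
    have haUV : a ∉ U ∪ V := (Set.mem_iInter.1 ha 0).2
    rcases hsub haK with h | h
    · exact haUV (Or.inl (hAU ⟨haK, h⟩))
    · exact haUV (Or.inr (hBV ⟨haK, h⟩))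
  obtain ⟨n, hn⟩ := hex
  rw [Set.diff_eq_empty] at hn
  obtain ⟨a1, ha1K, ha1t⟩ := h1
  obtain ⟨a2, ha2K, ha2t⟩ := h2
  obtain ⟨a, -, haU, haV⟩ := hpc n U V hU hV hn
    ⟨a1, Set.mem_iInter.1 ha1K n, hAU ⟨ha1K, ha1t⟩⟩
    ⟨a2, Set.mem_iInter.1 ha2K n, hBV ⟨ha2K, ha2t⟩⟩
  exact Set.disjoint_left.1 hUV haU haV

/-- The orbit set of a point under an upper semicontinuous map with connected
values on a continuum is a continuum. -/
theorem stmt9 [MetricSpace X] [CompactSpace X] [ConnectedSpace X] (F : X → Set X)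
    (hne : ∀ x, (F x).Nonempty) (hcl : ∀ x, IsClosed (F x))
    (hconn : ∀ x, IsConnected (F x)) (hF : USC F) (x : X) :
    IsCompact (OrbitSet F x) ∧ IsConnected (OrbitSet F x) := by
  classical
  have hgr : IsClosed {p : X × X | p.2 ∈ F p.1} := usc_graph_closed_s9 hcl hF
  set S : ℕ → Set (ℕ → X) := fun n => {u | u 0 = x ∧ ∀ i < n, u (i + 1) ∈ F (u i)} with hSdef
  -- each S n is closed
  have hScl : ∀ n, IsClosed (S n) := by
    intro n
    have h1 : IsClosed {u : ℕ → X | u 0 = x} :=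
      isClosed_singleton.preimage (continuous_apply 0)
    have h2 : ∀ i : ℕ, IsClosed {u : ℕ → X | u (i + 1) ∈ F (u i)} := fun i => by
      have := hgr.preimage ((continuous_apply i).prodMk (continuous_apply (i + 1)) :
        Continuous fun u : ℕ → X => (u i, u (i + 1)))
      simpa [Set.preimage_setOf_eq] using this
    have heq : S n = {u : ℕ → X | u 0 = x} ∩ ⋂ i ∈ Set.Iio n, {u : ℕ → X | u (i + 1) ∈ F (u i)} := by
      ext u
      simp only [hSdef, Set.mem_setOf_eq, Set.mem_inter_iff, Set.mem_iInter, Set.mem_Iio]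
    rw [heq]
    exact h1.inter (isClosed_biInter fun i _ => h2 i)
  -- S is decreasing
  have hSdec : ∀ n, S (n + 1) ⊆ S n := by
    rintro n u ⟨h0, h⟩
    exact ⟨h0, fun i hi => h i (hi.trans (Nat.lt_succ_self n))⟩
  -- a full orbit exists
  let w : ℕ → X := fun n => Nat.rec x (fun _ a => (hne a).some) n
  have hw : w ∈ OrbitSet F x := ⟨rfl, fun n => (hne (w n)).some_mem⟩
  have hSne : ∀ n, (S n).Nonempty := fun n => ⟨w, hw.1, fun i _ => hw.2 i⟩
  -- each S n is preconnected
  have hSpc : ∀ n, IsPreconnected (S n) := by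
    intro n
    induction n with
    | zero =>
      have heq : S 0 = Set.range (fun v : ℕ → X => fun i => if i = 0 then x else v i) := by
        ext u
        constructor
        · rintro ⟨h0, -⟩
          refine ⟨u, funext fun i => ?_⟩
          show (if i = 0 then x else u i) = u i
          by_cases hi : i = 0
          · rw [if_pos hi, hi, h0]
          · rw [if_neg hi]
        · rintro ⟨v, rfl⟩
          exact ⟨by simp, fun i hi => absurd hi (Nat.not_lt_zero i)⟩
      rw [heq]
      exact isPreconnected_range (continuous_pi fun i => by
        by_cases hi : i = 0
        · simp only [if_pos hi]; exact continuous_const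
        · simp only [if_neg hi]; exact continuous_apply i)
    | succ n ih =>
      let T : Set ((ℕ → X) × X) := {q | q.2 ∈ F (q.1 n)}
      have hTcl : IsClosed T := by
        have := hgr.preimage ((((continuous_apply n).comp continuous_fst).prodMk
          continuous_snd) : Continuous fun q : (ℕ → X) × X => (q.1 n, q.2))
        simpa [Set.preimage_setOf_eq] using this
      have hTcs : CompactSpace T := isCompact_iff_compactSpace.1 hTcl.isCompact
      let f : T → (ℕ → X) := fun q => q.1.1
      have hfc : Continuous f := continuous_fst.comp continuous_subtype_val
      have hfcm : IsClosedMap f := hfc.isClosedMap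
      have hfib : ∀ u ∈ S n, IsPreconnected (f ⁻¹' {u}) := by
        intro u hu
        have himg : f ⁻¹' {u} =
            (fun y : F (u n) => (⟨(u, y.1), y.2⟩ : T)) '' Set.univ := by
          ext q
          constructor
          · intro hq
            have hq' : q.1.1 = u := hq
            refine ⟨⟨q.1.2, hq' ▸ q.2⟩, trivial, ?_⟩
            apply Subtype.ext
            exact Prod.ext_iff.2 ⟨hq'.symm, rfl⟩
          · rintro ⟨y, -, rfl⟩
            exact rfl
        rw [himg]
        have : PreconnectedSpace (F (u n)) :=
          Subtype.preconnectedSpace (hconn (u n)).isPreconnected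
        exact isPreconnected_univ.image _
          ((Continuous.subtype_mk (continuous_const.prodMk continuous_subtype_val) _).continuousOn)
      have hrng : S n ⊆ Set.range f := fun u _ =>
        ⟨⟨(u, (hne (u n)).some), (hne (u n)).some_mem⟩, rfl⟩
      have hpre : IsPreconnected (f ⁻¹' S n) :=
        isPreconnected_preimage_of_isClosedMap hfcm ih hrng hfib
      let g : T → (ℕ → X) := fun q => fun i => if i = n + 1 then q.1.2 else q.1.1 i
      have hgc : Continuous g := continuous_pi fun i => by
        show Continuous fun q : T => if i = n + 1 then q.1.2 else q.1.1 i
        by_cases hi : i = n + 1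
        · simp only [if_pos hi]
          exact continuous_snd.comp continuous_subtype_val
        · simp only [if_neg hi]
          exact (continuous_apply i).comp (continuous_fst.comp continuous_subtype_val)
      have himg : S (n + 1) = g '' (f ⁻¹' S n) := by
        ext v
        constructor
        · rintro ⟨h0, hstep⟩
          refine ⟨⟨(v, v (n + 1)), hstep n (Nat.lt_succ_self n)⟩,
            ⟨h0, fun i hi => hstep i (hi.trans (Nat.lt_succ_self n))⟩, ?_⟩
          funext i
          show (if i = n + 1 then v (n + 1) else v i) = v i
          by_cases hi : i = n + 1
          · rw [if_pos hi, hi]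
          · rw [if_neg hi]
        · rintro ⟨⟨⟨u, y⟩, hy⟩, huS, rfl⟩
          obtain ⟨h0, hstep⟩ := huS
          constructor
          · show (if 0 = n + 1 then y else u 0) = x
            rw [if_neg (by omega)]
            exact h0
          · intro i hi
            show (if i + 1 = n + 1 then y else u (i + 1)) ∈
              F (if i = n + 1 then y else u i)
            rcases Nat.lt_succ_iff_lt_or_eq.1 hi with h | h
            · rw [if_neg (by omega), if_neg (by omega)]
              exact hstep i h
            · subst h
              rw [if_pos rfl, if_neg (by omega)]
              exact hy
      rw [himg]
      exact hpre.image g hgc.continuousOn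
  -- the orbit set is the intersection of the S n
  have hOeq : OrbitSet F x = ⋂ n, S n := by
    ext u
    constructor
    · rintro ⟨h0, h⟩
      exact Set.mem_iInter.2 fun n => ⟨h0, fun i _ => h i⟩
    · intro h
      have h' := Set.mem_iInter.1 h
      exact ⟨(h' 0).1, fun n => (h' (n + 1)).2 n (Nat.lt_succ_self n)⟩
  have hOcl : IsClosed (OrbitSet F x) := by
    rw [hOeq]; exact isClosed_iInter hScl
  refine ⟨hOcl.isCompact, ⟨w, hw⟩, ?_⟩
  rw [hOeq]
  exact isPreconnected_iInter_nested hSdec (fun n => (hScl n).isCompact) hScl hSne hSpc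
end

section
/- Let X be a continuum and F : X → 2^X upper semicontinuous such that F(x) is a finite set with at least two points for every x ∈ X. Then for every z ∈ X, the orbit set O_F(z) is homeomorphic to the Cantor set (i.e., it is a nonempty, compact, perfect, totally disconnected metric space). -/
open Set Topology Filter

variable {X : Type*}

/-- The graph of a USC map with compact closed values is closed. -/
lemma graph_closed_aux [MetricSpace X] (F : X → Set X) (hfin : ∀ x, (F x).Finite)
    (hF : USC F) : IsClosed {p : X × X | p.2 ∈ F p.1} := by
  rw [← isOpen_compl_iff, isOpen_iff_mem_nhds]
  rintro ⟨x, y⟩ (hy : y ∉ F x)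
  obtain ⟨W, V, hWo, hVo, hyW, hFV, hdis⟩ :=
    SeparatedNhds.of_isCompact_isCompact_isClosed isCompact_singleton
      (hfin x).isCompact (hfin x).isClosed (disjoint_singleton_left.2 hy)
  obtain ⟨U, hUo, hxU, hU⟩ := hF x V hVo hFV
  filter_upwards [prod_mem_nhds (hUo.mem_nhds hxU) (hWo.mem_nhds (hyW rfl))]
  rintro ⟨a, b⟩ ⟨ha, hb⟩ hmem
  exact hdis.ne_of_mem hb (hU a ha hmem) rfl

lemma iterF_finite (F : X → Set X) (hfin : ∀ x, (F x).Finite) (z : X) :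
    ∀ n, (IterF F n z).Finite := by
  intro n
  induction n with
  | zero => simp [IterF]
  | succ n ih => exact ih.biUnion fun y _ => hfin y

lemma mem_iterF (F : X → Set X) {z : X} {u : ℕ → X} (hu : u ∈ OrbitSet F z) :
    ∀ n, u n ∈ IterF F n z := by
  intro n
  induction n with
  | zero => simp [IterF, hu.1]
  | succ n ih =>
      exact Set.mem_biUnion ih (hu.2 n)

lemma finite_preconnected_subsingleton [MetricSpace X] {s : Set X} (hs : s.Finite)
    (hc : IsPreconnected s) : s.Subsingleton := by
  intro a ha b hb
  by_contra hab
  have h1 : IsOpen (s \ {a})ᶜ := ((hs.diff : (s \ {a}).Finite).isClosed).isOpen_compl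
  have h2 : IsOpen ({a} : Set X)ᶜ := isClosed_singleton.isOpen_compl
  have hcover : s ⊆ (s \ {a})ᶜ ∪ ({a} : Set X)ᶜ := by
    intro x hx
    by_cases hxa : x = a
    · exact Or.inl (by simp [hxa])
    · exact Or.inr (by simp [hxa])
  have hne1 : (s ∩ (s \ {a})ᶜ).Nonempty := ⟨a, ha, by simp⟩
  have hne2 : (s ∩ ({a} : Set X)ᶜ).Nonempty := ⟨b, hb, by simpa using Ne.symm hab⟩
  obtain ⟨x, hxs, hx1, hx2⟩ := hc _ _ h1 h2 hcover hne1 hne2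
  simp only [mem_compl_iff, mem_diff, mem_singleton_iff, not_and, not_not] at hx1 hx2
  exact hx2 (hx1 hxs)

/-- If every value of `F` is finite with at least two points, then every orbit set
is a Cantor set: nonempty, compact, perfect and totally disconnected. -/
theorem stmt10 [MetricSpace X] [CompactSpace X] [ConnectedSpace X] (F : X → Set X)
    (hfin : ∀ x, (F x).Finite) (hnt : ∀ x, (F x).Nontrivial) (hF : USC F) (z : X) :
    (OrbitSet F z).Nonempty ∧ IsCompact (OrbitSet F z) ∧
      Perfect (OrbitSet F z) ∧ IsTotallyDisconnected (OrbitSet F z) := by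
  -- a selection function
  have hgsel : ∀ x : X, ∃ y, y ∈ F x := fun x => (hnt x).nonempty
  choose g hg using hgsel
  -- nonempty
  have hne : (OrbitSet F z).Nonempty := by
    refine ⟨fun n => g^[n] z, by simp, fun n => ?_⟩
    show g^[n+1] z ∈ F (g^[n] z)
    rw [Function.iterate_succ_apply']
    exact hg _
  -- closedness
  have hclosed : IsClosed (OrbitSet F z) := by
    have heq : OrbitSet F z = ((fun u : ℕ → X => u 0) ⁻¹' {z}) ∩
        ⋂ n, (fun u : ℕ → X => (u n, u (n + 1))) ⁻¹' {p : X × X | p.2 ∈ F p.1} := by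
      ext u
      simp [OrbitSet]
    rw [heq]
    refine IsClosed.inter (isClosed_singleton.preimage (continuous_apply 0))
      (isClosed_iInter fun n => (graph_closed_aux F hfin hF).preimage
        ((continuous_apply n).prodMk (continuous_apply (n + 1))))
  refine ⟨hne, hclosed.isCompact, ⟨hclosed, ?_⟩, ?_⟩
  · -- preperfect
    rw [preperfect_iff_nhds]
    intro u hu U hU
    rw [nhds_pi, Filter.mem_pi] at hU
    obtain ⟨I, hIfin, t, ht, hIt⟩ := hU
    obtain ⟨N, hN⟩ := hIfin.bddAbove
    obtain ⟨w, hwF, hwne⟩ := (hnt (u N)).exists_ne (u (N + 1))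
    set v : ℕ → X := fun i => if i ≤ N then u i else g^[i - (N + 1)] w with hv
    have hvle : ∀ i, i ≤ N → v i = u i := fun i hi => if_pos hi
    have hvN1 : v (N + 1) = w := by
      simp only [hv]
      rw [if_neg (by omega)]
      simp
    have hvmem : v ∈ OrbitSet F z := by
      constructor
      · rw [hvle 0 (Nat.zero_le N), hu.1]
      · intro n
        rcases lt_trichotomy n N with h | h | h
        · rw [hvle n (le_of_lt h), hvle (n + 1) h]
          exact hu.2 n
        · subst h
          rw [hvN1, hvle n le_rfl]
          exact hwF
        · have h1 : ¬ n ≤ N := by omega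
          have h2 : ¬ n + 1 ≤ N := by omega
          simp only [hv, if_neg h1, if_neg h2]
          have h3 : n + 1 - (N + 1) = (n - (N + 1)) + 1 := by omega
          rw [h3, Function.iterate_succ_apply']
          exact hg _
    have hvne : v ≠ u := by
      intro h
      exact hwne (by rw [← hvN1, h])
    refine ⟨v, ⟨hIt fun i hi => ?_, hvmem⟩, hvne⟩
    rw [hvle i (hN hi)]
    exact mem_of_mem_nhds (ht i)
  · -- totally disconnected
    intro t hts hconn u hu v hv
    funext n
    have himg : IsPreconnected ((fun w : ℕ → X => w n) '' t) :=
      hconn.image _ (continuous_apply n).continuousOn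
    have hsub : ((fun w : ℕ → X => w n) '' t) ⊆ IterF F n z := by
      rintro _ ⟨w, hw, rfl⟩
      exact mem_iterF F (hts hw) n
    exact finite_preconnected_subsingleton ((iterF_finite F hfin z n).subset hsub) himg
      ⟨u, hu, rfl⟩ ⟨v, hv, rfl⟩
end

section
/- Let X be a continuum and f_1, …, f_k : X → X continuous surjections such that f_1^{-1}(x_0) ∩ ⋯ ∩ f_k^{-1}(x_0) ≠ ∅ for some x_0 ∈ X. With F(x) = f_1^{-1}(x) ∪ ⋯ ∪ f_k^{-1}(x), the set ⋃_{x ∈ X} O_F(x) ⊆ X^ℕ is a continuum (compact and connected). -/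
open Set Topology Filter

variable {X : Type*}

/-- Nested intersection of nonempty compact preconnected sets is connected. -/
theorem isConnected_iInter_nested' {Y : Type*} [TopologicalSpace Y] [T2Space Y]
    (A : ℕ → Set Y) (hdec : ∀ m, A (m + 1) ⊆ A m) (hne : ∀ m, (A m).Nonempty)
    (hcomp : ∀ m, IsCompact (A m)) (hconn : ∀ m, IsPreconnected (A m)) :
    IsConnected (⋂ m, A m) := by
  have hcl : ∀ m, IsClosed (A m) := fun m => (hcomp m).isClosed
  have hKcl : IsClosed (⋂ m, A m) := isClosed_iInter hcl
  have hKc : IsCompact (⋂ m, A m) :=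
    (hcomp 0).of_isClosed_subset hKcl (iInter_subset A 0)
  have hKne : (⋂ m, A m).Nonempty :=
    IsCompact.nonempty_iInter_of_sequence_nonempty_isCompact_isClosed A hdec hne (hcomp 0) hcl
  refine ⟨hKne, ?_⟩
  rw [isPreconnected_iff_subset_of_fully_disjoint_closed hKcl]
  intro t1 t2 ht1 ht2 hcover hdisj
  set K := ⋂ m, A m with hK
  obtain ⟨U, V, hU, hV, hsU, hsV, hUV⟩ :=
    SeparatedNhds.of_isCompact_isCompact (hKc.inter_right ht1) (hKc.inter_right ht2)
      (hdisj.mono inter_subset_right inter_subset_right)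
  have hKUV : K ⊆ U ∪ V := by
    intro x hx
    rcases hcover hx with h | h
    · exact Or.inl (hsU ⟨hx, h⟩)
    · exact Or.inr (hsV ⟨hx, h⟩)
  -- some A m is inside U ∪ V
  have hex : ∃ m, A m ⊆ U ∪ V := by
    by_contra hcon
    push_neg at hcon
    have hBne : ∀ m, (A m \ (U ∪ V)).Nonempty := by
      intro m
      rcases not_subset.1 (hcon m) with ⟨x, hx, hx'⟩
      exact ⟨x, hx, hx'⟩
    have hBcl : ∀ m, IsClosed (A m \ (U ∪ V)) :=
      fun m => (hcl m).sdiff (hU.union hV)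
    have := IsCompact.nonempty_iInter_of_sequence_nonempty_isCompact_isClosed
      (fun m => A m \ (U ∪ V)) (fun m => diff_subset_diff_left (hdec m)) hBne
      ((hcomp 0).of_isClosed_subset (hBcl 0) diff_subset) hBcl
    rcases this with ⟨x, hx⟩
    simp only [mem_iInter, mem_diff] at hx
    have hxK : x ∈ K := mem_iInter.2 fun m => (hx m).1
    exact (hx 0).2 (hKUV hxK)
  rcases hex with ⟨m, hm⟩
  have hdiseq : U ∩ V = ∅ := hUV.inter_eq
  have : ¬ ((A m ∩ U).Nonempty ∧ (A m ∩ V).Nonempty) := by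
    rintro ⟨h1, h2⟩
    rcases hconn m U V hU hV hm h1 h2 with ⟨x, _, hx⟩
    rw [hdiseq] at hx
    exact hx
  rcases not_and_or.1 this with h | h
  · right
    intro x hx
    rcases hcover hx with hxt | hxt
    · exact absurd ⟨x, ⟨iInter_subset A m hx, hsU ⟨hx, hxt⟩⟩⟩ h
    · exact hxt
  · left
    intro x hx
    rcases hcover hx with hxt | hxt
    · exact hxt
    · exact absurd ⟨x, ⟨iInter_subset A m hx, hsV ⟨hx, hxt⟩⟩⟩ h

section Orbit

variable {k : ℕ} (f : Fin k → X → X)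

/-- The set of sequences satisfying the first `m` backward-orbit constraints with indices `σ`. -/
def ASet (m : ℕ) (σ : ℕ → Fin k) : Set (ℕ → X) :=
  {u | ∀ n, n < m → f (σ n) (u (n + 1)) = u n}

theorem orbit_through (hs : ∀ i, Function.Surjective (f i))
    (ρ : ℕ → Fin k) (z : X) (j : ℕ) :
    ∃ u : ℕ → X, u (j) = z ∧ ∀ n, f (ρ n) (u (n + 1)) = u n := by
  classical
  -- forward part
  let g : ℕ → X := fun t => Nat.rec (motive := fun _ => X) z
    (fun t p => (hs (ρ (j + t)) p).choose) t
  have hg0 : g 0 = z := rfl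
  have hgs : ∀ t, f (ρ (j + t)) (g (t + 1)) = g t := fun t =>
    (hs (ρ (j + t)) (g t)).choose_spec
  -- backward part
  let h : ℕ → X := fun t => Nat.rec (motive := fun _ => X) z
    (fun t p => f (ρ (j - 1 - t)) p) t
  have hh0 : h 0 = z := rfl
  have hhs : ∀ t, h (t + 1) = f (ρ (j - 1 - t)) (h t) := fun t => rfl
  refine ⟨fun n => if n < j then h (j - n) else g (n - j), by simp [hg0], ?_⟩
  intro n
  by_cases hn : n < j
  · have hval : (if n + 1 < j then h (j - (n + 1)) else g (n + 1 - j)) = h (j - n - 1) := by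
      by_cases hn1 : n + 1 < j
      · rw [if_pos hn1, show j - (n + 1) = j - n - 1 from by omega]
      · rw [if_neg hn1]
        have h1 : n + 1 - j = 0 := by omega
        have h2 : j - n - 1 = 0 := by omega
        rw [h1, h2, hg0, hh0]
    simp only [if_pos hn, hval]
    have h4 : j - 1 - (j - n - 1) = n := by omega
    have h5 := hhs (j - n - 1)
    rw [h4] at h5
    have h6 : j - n = j - n - 1 + 1 := by omega
    conv_rhs => rw [h6]
    rw [h5]
  · have h1 : ¬ (n + 1 < j) := by omega
    simp only [if_neg hn, if_neg h1]
    have h2 : n + 1 - j = (n - j) + 1 := by omega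
    rw [h2]
    have := hgs (n - j)
    have h3 : j + (n - j) = n := by omega
    rwa [h3] at this

theorem ASet_congr (m : ℕ) {σ τ : ℕ → Fin k} (h : ∀ n, n < m → σ n = τ n) :
    ASet f m σ = ASet f m τ := by
  ext u
  constructor <;> intro hu n hn
  · rw [← h n hn]; exact hu n hn
  · rw [h n hn]; exact hu n hn

theorem isConnected_ASet [TopologicalSpace X] [ConnectedSpace X]
    (hc : ∀ i, Continuous (f i)) (m : ℕ) (σ : ℕ → Fin k) :
    IsConnected (ASet f m σ) := by
  classical
  let c : ℕ → X → X := fun t => Nat.rec (motive := fun _ => X → X) id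
    (fun t p => (f (σ (m - 1 - t))) ∘ p) t
  have hc0 : c 0 = id := rfl
  have hcs : ∀ t, c (t + 1) = (f (σ (m - 1 - t))) ∘ c t := fun t => rfl
  have hccont : ∀ t, Continuous (c t) := by
    intro t
    induction t with
    | zero => exact continuous_id
    | succ t ih => exact (hc _).comp ih
  set Φ : (ℕ → X) → (ℕ → X) := fun v n => if n < m then c (m - n) (v m) else v n with hΦ
  have hΦcont : Continuous Φ := by
    apply continuous_pi
    intro n
    by_cases hn : n < m
    · simp only [hΦ, if_pos hn]
      exact (hccont _).comp (continuous_apply m)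
    · simp only [hΦ, if_neg hn]
      exact continuous_apply n
  have hrange : range Φ = ASet f m σ := by
    apply Subset.antisymm
    · rintro _ ⟨v, rfl⟩
      intro n hn
      have hval : Φ v (n + 1) = c (m - n - 1) (v m) := by
        by_cases h1 : n + 1 < m
        · simp only [hΦ, if_pos h1]
          rw [show m - (n + 1) = m - n - 1 from by omega]
        · have h2 : n + 1 = m := by omega
          simp only [hΦ, if_neg h1]
          rw [show m - n - 1 = 0 from by omega, hc0, h2]
          rfl
      have hvn : Φ v n = c (m - n) (v m) := by simp only [hΦ, if_pos hn]
      rw [hval, hvn]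
      have h5 := hcs (m - n - 1)
      rw [show m - 1 - (m - n - 1) = n from by omega] at h5
      conv_rhs => rw [show m - n = m - n - 1 + 1 from by omega]
      rw [h5]
      rfl
    · intro u hu
      refine ⟨u, ?_⟩
      have key : ∀ t, t ≤ m → c t (u m) = u (m - t) := by
        intro t
        induction t with
        | zero => intro _; simp [hc0]
        | succ t ih =>
          intro ht
          rw [hcs]
          have h6 : c t (u m) = u (m - t) := ih (by omega)
          have h7 := hu (m - 1 - t) (by omega)
          rw [show m - 1 - t + 1 = m - t from by omega] at h7
          simp only [Function.comp_apply, h6, h7]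
          rw [show m - 1 - t = m - (t + 1) from by omega]
      funext n
      by_cases hn : n < m
      · simp only [hΦ, if_pos hn]
        exact key (m - n) (by omega) |>.trans (by rw [show m - (m - n) = n from by omega])
      · simp only [hΦ, if_neg hn]
  rw [← hrange]
  exact isConnected_range hΦcont

theorem ASet_inter_nonempty (hs : ∀ i, Function.Surjective (f i))
    {x₀ y₀ : X} (hy : ∀ i, f i y₀ = x₀) (m j : ℕ) {σ τ : ℕ → Fin k}
    (hagree : ∀ n, n ≠ j → σ n = τ n) :
    (ASet f m σ ∩ ASet f m τ).Nonempty := by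
  obtain ⟨u, hu1, hu2⟩ := orbit_through f hs σ y₀ (j + 1)
  refine ⟨u, fun n _ => hu2 n, fun n _ => ?_⟩
  by_cases hn : n = j
  · subst hn
    have h8 := hu2 n
    rw [hu1, hy] at h8 ⊢
    exact h8
  · rw [← hagree n hn]
    exact hu2 n

theorem ASet_reflTransGen (hs : ∀ i, Function.Surjective (f i))
    {x₀ y₀ : X} (hy : ∀ i, f i y₀ = x₀) (m : ℕ) (σ τ : ℕ → Fin k) :
    Relation.ReflTransGen (fun a b => (ASet f m a ∩ ASet f m b).Nonempty) σ τ := by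
  classical
  set step : ℕ → (ℕ → Fin k) := fun j n => if n < j then τ n else σ n with hstep
  have key : ∀ j, Relation.ReflTransGen
      (fun a b => (ASet f m a ∩ ASet f m b).Nonempty) σ (step j) := by
    intro j
    induction j with
    | zero =>
      have : step 0 = σ := by funext n; simp [hstep]
      rw [this]
    | succ j ih =>
      refine ih.tail ?_
      apply ASet_inter_nonempty f hs hy m j
      intro n hn
      simp only [hstep]
      rcases Nat.lt_or_ge n j with h | h
      · rw [if_pos h, if_pos (by omega)]
      · rw [if_neg (by omega), if_neg (by omega)]
  refine (key m).tail ?_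
  have heq : ASet f m (step m) = ASet f m τ := by
    apply ASet_congr
    intro n hn
    simp [hstep, hn]
  rw [heq, inter_self]
  obtain ⟨u, _, hu2⟩ := orbit_through f hs τ x₀ 0
  exact ⟨u, fun n _ => hu2 n⟩

end Orbit

/-- If the `f_i` are continuous surjections of a continuum with a common point in
some fiber, then the union of all orbit sets of `F(x) = ⋃ᵢ fᵢ⁻¹(x)` is a continuum. -/
theorem stmt13 [MetricSpace X] [CompactSpace X] [ConnectedSpace X]
    (k : ℕ) (hk : 0 < k) (f : Fin k → X → X)
    (hc : ∀ i, Continuous (f i)) (hs : ∀ i, Function.Surjective (f i))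
    (x₀ : X) (h0 : (⋂ i : Fin k, f i ⁻¹' {x₀}).Nonempty) :
    IsCompact (⋃ x : X, OrbitSet (fun x => ⋃ i : Fin k, f i ⁻¹' {x}) x) ∧
      IsConnected (⋃ x : X, OrbitSet (fun x => ⋃ i : Fin k, f i ⁻¹' {x}) x) := by
  classical
  have hkne : Nonempty (Fin k) := ⟨⟨0, hk⟩⟩
  obtain ⟨y₀, hy₀⟩ := h0
  have hy : ∀ i, f i y₀ = x₀ := by
    intro i
    have := mem_iInter.1 hy₀ i
    simpa using this
  -- the set in question, described by its constraints
  have hS : (⋃ x : X, OrbitSet (fun x => ⋃ i : Fin k, f i ⁻¹' {x}) x) =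
      {u : ℕ → X | ∀ n, ∃ i, f i (u (n + 1)) = u n} := by
    ext u
    simp only [mem_iUnion, OrbitSet, mem_setOf_eq, mem_preimage, mem_singleton_iff]
    constructor
    · rintro ⟨x, _, hx⟩ n
      exact hx n
    · intro h
      exact ⟨u 0, rfl, h⟩
  -- closedness
  have hclosed : IsClosed {u : ℕ → X | ∀ n, ∃ i, f i (u (n + 1)) = u n} := by
    have : {u : ℕ → X | ∀ n, ∃ i, f i (u (n + 1)) = u n} =
        ⋂ n, ⋃ i, {u : ℕ → X | f i (u (n + 1)) = u n} := by
      ext u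
      simp [mem_iInter, mem_iUnion]
    rw [this]
    refine isClosed_iInter fun n => isClosed_iUnion_of_finite fun i => ?_
    exact isClosed_eq ((hc i).comp (continuous_apply (n + 1))) (continuous_apply n)
  -- the decreasing family of finite-stage sets
  set A : ℕ → Set (ℕ → X) := fun m => ⋃ σ : ℕ → Fin k, ASet f m σ with hA
  have hAalt : ∀ m, A m = {u : ℕ → X | ∀ n, n < m → ∃ i, f i (u (n + 1)) = u n} := by
    intro m
    ext u
    simp only [hA, mem_iUnion, ASet, mem_setOf_eq]
    constructor
    · rintro ⟨σ, hσ⟩ n hn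
      exact ⟨σ n, hσ n hn⟩
    · intro h
      refine ⟨fun n => if hn : n < m then (h n hn).choose else ⟨0, hk⟩, fun n hn => ?_⟩
      simp only [dif_pos hn]
      exact (h n hn).choose_spec
  have hiInter : {u : ℕ → X | ∀ n, ∃ i, f i (u (n + 1)) = u n} = ⋂ m, A m := by
    ext u
    simp only [mem_iInter, hAalt, mem_setOf_eq]
    constructor
    · intro h m n _
      exact h n
    · intro h n
      exact h (n + 1) n (by omega)
  have hdec : ∀ m, A (m + 1) ⊆ A m := by
    intro m
    rw [hAalt, hAalt]
    intro u hu n hn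
    exact hu n (by omega)
  have hne : ∀ m, (A m).Nonempty := by
    intro m
    obtain ⟨u, _, hu2⟩ := orbit_through f hs (fun _ => ⟨0, hk⟩) x₀ 0
    exact ⟨u, mem_iUnion.2 ⟨fun _ => ⟨0, hk⟩, fun n _ => hu2 n⟩⟩
  have hAclosed : ∀ m, IsClosed (A m) := by
    intro m
    have : A m = ⋂ n ∈ Finset.range m, ⋃ i, {u : ℕ → X | f i (u (n + 1)) = u n} := by
      rw [hAalt]
      ext u
      simp [mem_iInter, mem_iUnion, Finset.mem_range]
    rw [this]
    refine isClosed_biInter fun n _ => isClosed_iUnion_of_finite fun i => ?_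
    exact isClosed_eq ((hc i).comp (continuous_apply (n + 1))) (continuous_apply n)
  have hAcomp : ∀ m, IsCompact (A m) := fun m => (hAclosed m).isCompact
  have hAconn : ∀ m, IsPreconnected (A m) := by
    intro m
    exact IsPreconnected.iUnion_of_reflTransGen
      (fun σ => (isConnected_ASet f hc m σ).isPreconnected)
      (fun σ τ => ASet_reflTransGen f hs hy m σ τ)
  constructor
  · rw [hS]
    exact hclosed.isCompact
  · rw [hS, hiInter]
    exact isConnected_iInter_nested' A hdec hne hAcomp hAconn
end

section
/- Let X be a compact metric space with no isolated points and F : X → 2^X upper semicontinuous. If some p ∈ X has a dense orbit (there exists (x_n) ∈ O_F(p) such that {x_n : n ∈ ℕ} is dense in X), then F is transitive: for every pair of nonempty open sets U, V ⊆ X there exist x ∈ U and k ∈ ℕ with F^k(x) ∩ V ≠ ∅. -/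
open Set Topology Filter

variable {X : Type*}

/-- On a compactum without isolated points, the existence of a point with a dense
orbit implies transitivity. -/
theorem stmt14 [MetricSpace X] [CompactSpace X]
    (hiso : ∀ x : X, Filter.NeBot (nhdsWithin x {x}ᶜ))
    (F : X → Set X) (hne : ∀ x, (F x).Nonempty) (hcl : ∀ x, IsClosed (F x))
    (hF : USC F) (p : X) (u : ℕ → X) (hu : u ∈ OrbitSet F p)
    (hdense : Dense (Set.range u)) :
    ∀ U V : Set X, IsOpen U → U.Nonempty → IsOpen V → V.Nonempty →
      ∃ x ∈ U, ∃ m : ℕ, 0 < m ∧ (IterF F m x ∩ V).Nonempty := by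
  intro U V hUo hUne hVo hVne
  haveI : ∀ x : X, NeBot (𝓝[≠] x) := hiso
  have hmem : ∀ n k, u (n + k) ∈ IterF F k (u n) := by
    intro n k
    induction k with
    | zero => simp [IterF]
    | succ k ih =>
      simp only [IterF, mem_iUnion]
      exact ⟨u (n + k), ih, hu.2 (n + k)⟩
  -- find n with u n ∈ U
  obtain ⟨x, ⟨n, rfl⟩, hxU⟩ := hdense.exists_mem_open hUo hUne
  -- dense after removing finitely many points
  have hd2 : Dense (Set.range u \ (u '' Set.Iic n)) :=
    hdense.diff_finite ((Set.finite_Iic n).image u)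
  obtain ⟨y, ⟨⟨m, rfl⟩, hy2⟩, hyV⟩ := hd2.exists_mem_open hVo hVne
  have hmn : n < m := by
    by_contra h
    exact hy2 ⟨m, le_of_not_gt h, rfl⟩
  refine ⟨u n, hxU, m - n, Nat.sub_pos_of_lt hmn, u m, ?_, hyV⟩
  have := hmem n (m - n)
  rwa [Nat.add_sub_cancel' hmn.le] at this
end

section
/- Let X be a compact metric space and F : X → 2^X upper semicontinuous. Then F is dense minimal (every point of X has a dense orbit) if and only if F is weak dense minimal (for every x ∈ X and every nonempty open U ⊆ X, there is k ∈ ℕ with F^k(x) ∩ U ≠ ∅). -/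
open Set Topology Filter

variable {X : Type*}

lemma iterF_zero (F : X → Set X) (x : X) : IterF F 0 x = {x} := rfl

lemma iterF_succ (F : X → Set X) (n : ℕ) (x : X) :
    IterF F (n + 1) x = ⋃ y ∈ IterF F n x, F y := rfl

lemma orbit_mem_iter (F : X → Set X) {z : X} {v : ℕ → X}
    (hv : v ∈ OrbitSet F z) : ∀ n, v n ∈ IterF F n z := by
  intro n
  induction n with
  | zero => simp [iterF_zero, hv.1]
  | succ n ih =>
      rw [iterF_succ]
      exact Set.mem_biUnion ih (hv.2 n)

lemma iter_mono (F : X → Set X) {x y : X} (hy : y ∈ F x) :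
    ∀ n, IterF F n y ⊆ IterF F (n + 1) x := by
  intro n
  induction n with
  | zero =>
      intro w hw
      rw [iterF_zero, Set.mem_singleton_iff] at hw
      subst hw
      rw [iterF_succ, iterF_zero]
      exact Set.mem_biUnion rfl hy
  | succ n ih =>
      intro w hw
      rw [iterF_succ] at hw
      obtain ⟨z, hz, hw⟩ := Set.mem_iUnion₂.mp hw
      rw [iterF_succ]
      exact Set.mem_biUnion (ih hz) hw

lemma chain_of_mem_iter (F : X → Set X) :
    ∀ m z w, w ∈ IterF F m z →
      ∃ c : ℕ → X, c 0 = z ∧ c m = w ∧ ∀ j < m, c (j + 1) ∈ F (c j) := by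
  intro m
  induction m with
  | zero =>
      intro z w hw
      rw [iterF_zero, Set.mem_singleton_iff] at hw
      exact ⟨fun _ => z, rfl, hw.symm ▸ rfl, by omega⟩
  | succ m ih =>
      intro z w hw
      rw [iterF_succ] at hw
      obtain ⟨y, hy, hwy⟩ := Set.mem_iUnion₂.mp hw
      obtain ⟨c, hc0, hcm, hstep⟩ := ih z y hy
      refine ⟨fun j => if j ≤ m then c j else w, by simp [hc0], by simp, ?_⟩
      intro j hj
      rcases Nat.lt_or_ge j m with h | h
      · have h1 : j + 1 ≤ m := h
        simp only [if_pos h1, if_pos (Nat.le_of_lt h)]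
        exact hstep j h
      · have hjm : j = m := by omega
        subst hjm
        simp only [if_neg (by omega : ¬ j + 1 ≤ j), if_pos (le_refl j)]
        rw [hcm]
        exact hwy

noncomputable def tailOrb (F : X → Set X) (hne : ∀ x, (F x).Nonempty) (z : X) : ℕ → X
  | 0 => z
  | n + 1 => (hne (tailOrb F hne z n)).choose

lemma tailOrb_orbit (F : X → Set X) (hne : ∀ x, (F x).Nonempty) (z : X) :
    tailOrb F hne z ∈ OrbitSet F z :=
  ⟨rfl, fun n => (hne (tailOrb F hne z n)).choose_spec⟩

lemma exists_orbit_hit (F : X → Set X) (hne : ∀ x, (F x).Nonempty)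
    {z : X} {U : Set X} {m : ℕ} (hm : 0 < m) {w : X}
    (hw : w ∈ IterF F m z) (hwU : w ∈ U) :
    ∃ c, c ∈ OrbitSet F z ∧ ∃ M, 1 ≤ M ∧ c M ∈ U := by
  obtain ⟨c, hc0, hcm, hstep⟩ := chain_of_mem_iter F m z w hw
  set t := tailOrb F hne w with ht
  have htorb := tailOrb_orbit F hne w
  refine ⟨fun j => if j ≤ m then c j else t (j - m), ⟨by simp [hc0], ?_⟩, m, hm, by simp [hcm, hwU]⟩
  intro n
  rcases Nat.lt_or_ge n m with h | h
  · have h1 : n + 1 ≤ m := h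
    simp only [if_pos h1, if_pos (Nat.le_of_lt h)]
    exact hstep n h
  · rcases Nat.eq_or_lt_of_le h with h2 | h2
    · simp only [if_neg (by omega : ¬ n + 1 ≤ m), if_pos (by omega : n ≤ m)]
      have he1 : n + 1 - m = 1 := by omega
      have he2 : c n = w := by rw [← h2, hcm]
      rw [he1, he2]
      have := htorb.2 0
      rwa [htorb.1] at this
    · simp only [if_neg (by omega : ¬ n + 1 ≤ m), if_neg (by omega : ¬ n ≤ m)]
      have h3 : n + 1 - m = (n - m) + 1 := by omega
      rw [h3]
      exact htorb.2 (n - m)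

noncomputable def chainSeq (F : X → Set X) (e : ℕ → Set X) (p : X)
    (hA : ∀ z k, ∃ cm : (ℕ → X) × ℕ,
      cm.1 ∈ OrbitSet F z ∧ 1 ≤ cm.2 ∧ cm.1 cm.2 ∈ e k) :
    ℕ → (ℕ → X) × ℕ
  | 0 => (hA p 0).choose
  | k + 1 => (hA ((chainSeq F e p hA k).1 (chainSeq F e p hA k).2) (k + 1)).choose

lemma chainSeq_zero_spec (F : X → Set X) (e : ℕ → Set X) (p : X)
    (hA : ∀ z k, ∃ cm : (ℕ → X) × ℕ,
      cm.1 ∈ OrbitSet F z ∧ 1 ≤ cm.2 ∧ cm.1 cm.2 ∈ e k) :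
    (chainSeq F e p hA 0).1 ∈ OrbitSet F p ∧ 1 ≤ (chainSeq F e p hA 0).2 ∧
      (chainSeq F e p hA 0).1 (chainSeq F e p hA 0).2 ∈ e 0 :=
  (hA p 0).choose_spec

lemma chainSeq_succ_spec (F : X → Set X) (e : ℕ → Set X) (p : X)
    (hA : ∀ z k, ∃ cm : (ℕ → X) × ℕ,
      cm.1 ∈ OrbitSet F z ∧ 1 ≤ cm.2 ∧ cm.1 cm.2 ∈ e k) (k : ℕ) :
    (chainSeq F e p hA (k + 1)).1 ∈
      OrbitSet F ((chainSeq F e p hA k).1 (chainSeq F e p hA k).2) ∧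
    1 ≤ (chainSeq F e p hA (k + 1)).2 ∧
      (chainSeq F e p hA (k + 1)).1 (chainSeq F e p hA (k + 1)).2 ∈ e (k + 1) :=
  (hA ((chainSeq F e p hA k).1 (chainSeq F e p hA k).2) (k + 1)).choose_spec

def stateSeq (m : ℕ → ℕ) : ℕ → ℕ × ℕ
  | 0 => (0, 0)
  | n + 1 =>
      if (stateSeq m n).2 < m (stateSeq m n).1 then
        ((stateSeq m n).1, (stateSeq m n).2 + 1)
      else ((stateSeq m n).1 + 1, 1)

lemma stateSeq_inv (m : ℕ → ℕ) (hm : ∀ k, 1 ≤ m k) :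
    ∀ n, (stateSeq m n).2 ≤ m (stateSeq m n).1 := by
  intro n
  induction n with
  | zero => simp [stateSeq]
  | succ n ih =>
      rw [stateSeq]
      split
      · simpa using ‹(stateSeq m n).2 < m (stateSeq m n).1›
      · simpa using hm _

lemma stateSeq_reach_in (m : ℕ → ℕ) :
    ∀ d n, (stateSeq m n).2 + d ≤ m (stateSeq m n).1 →
      stateSeq m (n + d) = ((stateSeq m n).1, (stateSeq m n).2 + d) := by
  intro d
  induction d with
  | zero => intro n _; simp
  | succ d ih =>
      intro n h
      have h1 := ih n (by omega)
      have : n + (d + 1) = (n + d) + 1 := by omega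
      rw [this, stateSeq, h1]
      simp only
      rw [if_pos (by simpa using (by omega : (stateSeq m n).2 + d < m (stateSeq m n).1))]
      rfl

lemma stateSeq_reach (m : ℕ → ℕ) (hm : ∀ k, 1 ≤ m k) :
    ∀ k, ∃ n, stateSeq m n = (k, m k) := by
  intro k
  induction k with
  | zero =>
      refine ⟨m 0, ?_⟩
      have := stateSeq_reach_in m (m 0) 0 (by simp [stateSeq])
      simpa [stateSeq] using this
  | succ k ih =>
      obtain ⟨n, hn⟩ := ih
      have h1 : stateSeq m (n + 1) = (k + 1, 1) := by
        rw [stateSeq, hn]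
        simp
      have hmk := hm (k + 1)
      refine ⟨n + 1 + (m (k + 1) - 1), ?_⟩
      have h2 := stateSeq_reach_in m (m (k + 1) - 1) (n + 1) (by rw [h1]; simp; omega)
      rw [h2, h1]
      have : 1 + (m (k + 1) - 1) = m (k + 1) := by omega
      simp [this]

/-- `F` is dense minimal iff it is weak dense minimal. -/
theorem stmt16 [MetricSpace X] [CompactSpace X]
    (F : X → Set X) (hne : ∀ x, (F x).Nonempty) (hcl : ∀ x, IsClosed (F x))
    (hF : USC F) :
    (∀ p : X, ∃ u ∈ OrbitSet F p, Dense (Set.range u)) ↔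
      (∀ x : X, ∀ U : Set X, IsOpen U → U.Nonempty →
        ∃ m : ℕ, 0 < m ∧ (IterF F m x ∩ U).Nonempty) := by
  constructor
  · intro H x U hU hUne
    obtain ⟨y, hy⟩ := hne x
    obtain ⟨v, hv, hvd⟩ := H y
    obtain ⟨w, hwU, hwv⟩ := hvd.inter_open_nonempty U hU hUne
    obtain ⟨n, rfl⟩ := hwv
    exact ⟨n + 1, Nat.succ_pos n, ⟨v n, iter_mono F hy n (orbit_mem_iter F hv n), hwU⟩⟩
  · intro H p
    obtain ⟨b, hbc, hbne, hb⟩ := TopologicalSpace.exists_countable_basis X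
    have hbnonempty : b.Nonempty := by
      obtain ⟨o, hob, -, -⟩ := hb.exists_subset_of_mem_open (Set.mem_univ p) isOpen_univ
      exact ⟨o, hob⟩
    obtain ⟨e, he⟩ := hbc.exists_eq_range hbnonempty
    have heb : ∀ k, e k ∈ b := fun k => he ▸ Set.mem_range_self k
    have heo : ∀ k, IsOpen (e k) := fun k => hb.isOpen (heb k)
    have hene : ∀ k, (e k).Nonempty := fun k =>
      Set.nonempty_iff_ne_empty.mpr (fun h => hbne (h ▸ heb k))
    have hA : ∀ z k, ∃ cm : (ℕ → X) × ℕ,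
        cm.1 ∈ OrbitSet F z ∧ 1 ≤ cm.2 ∧ cm.1 cm.2 ∈ e k := by
      intro z k
      obtain ⟨m, hm, w, hw1, hw2⟩ := H z (e k) (heo k) (hene k)
      obtain ⟨c, hc, M, hM, hcM⟩ := exists_orbit_hit F hne hm hw1 hw2
      exact ⟨(c, M), hc, hM, hcM⟩
    set c : ℕ → ℕ → X := fun k => (chainSeq F e p hA k).1 with hcdef
    set m : ℕ → ℕ := fun k => (chainSeq F e p hA k).2 with hmdef
    have hc0 : c 0 ∈ OrbitSet F p := (chainSeq_zero_spec F e p hA).1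
    have hm1 : ∀ k, 1 ≤ m k := by
      intro k
      cases k with
      | zero => exact (chainSeq_zero_spec F e p hA).2.1
      | succ k => exact (chainSeq_succ_spec F e p hA k).2.1
    have hhit : ∀ k, c k (m k) ∈ e k := by
      intro k
      cases k with
      | zero => exact (chainSeq_zero_spec F e p hA).2.2
      | succ k => exact (chainSeq_succ_spec F e p hA k).2.2
    have hcsucc : ∀ k, c (k + 1) ∈ OrbitSet F (c k (m k)) :=
      fun k => (chainSeq_succ_spec F e p hA k).1
    have horb : ∀ k j, c k (j + 1) ∈ F (c k j) := by
      intro k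
      cases k with
      | zero => exact hc0.2
      | succ k => exact (hcsucc k).2
    have hinv := stateSeq_inv m hm1
    refine ⟨fun n => c (stateSeq m n).1 (stateSeq m n).2, ⟨?_, ?_⟩, ?_⟩
    · show c (stateSeq m 0).1 (stateSeq m 0).2 = p
      exact hc0.1
    · intro n
      show c (stateSeq m (n + 1)).1 (stateSeq m (n + 1)).2 ∈
        F (c (stateSeq m n).1 (stateSeq m n).2)
      rw [stateSeq]
      by_cases h : (stateSeq m n).2 < m (stateSeq m n).1
      · rw [if_pos h]
        exact horb (stateSeq m n).1 (stateSeq m n).2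
      · rw [if_neg h]
        have hj : (stateSeq m n).2 = m (stateSeq m n).1 :=
          le_antisymm (hinv n) (not_lt.mp h)
        rw [hj]
        have h1 := (hcsucc (stateSeq m n).1).2 0
        rwa [(hcsucc (stateSeq m n).1).1] at h1
    · rw [hb.dense_iff]
      intro o hob hone
      rw [he] at hob
      obtain ⟨k, rfl⟩ := hob
      obtain ⟨n, hn⟩ := stateSeq_reach m hm1 k
      refine ⟨c (stateSeq m n).1 (stateSeq m n).2, ?_, Set.mem_range_self n⟩
      rw [hn]
      exact hhit k
end
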